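/- For every m with 1 ≤ m ≤ M, the stationary level vectors satisfy the linear relation π^m B^m = −π^{m−1} U^{m−1}. -/

import Mathlib

open Matrix

open Finset

lemma abs_gt' (a b : ℕ) (h : a + 2 ≤ b ∨ b + 2 ≤ a) : 1 < |((a:ℤ) - b)| := by
  rcases abs_cases ((a:ℤ) - b) with ⟨he, hs⟩ | ⟨he, hs⟩ <;> rw [he] <;> omega

lemma sum_two' {N : ℕ} (f : Fin N → ℝ) (a b : Fin N) (hab : a ≠ b)
    (h : ∀ n, n ≠ a → n ≠ b → f n = 0) : ∑ n, f n = f a + f b := by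
  have key : ∀ n : Fin N, f n = (if n = a then f a else 0) + (if n = b then f b else 0) := by
    intro n
    by_cases h1 : n = a
    · subst h1; simp [hab]
    · by_cases h2 : n = b
      · subst h2; simp [h1]
      · simp [h1, h2, h n h1 h2]
  rw [Finset.sum_congr rfl fun n _ => key n, Finset.sum_add_distrib]
  simp

lemma sum_three' {N : ℕ} (f : Fin N → ℝ) (a b c : Fin N) (hab : a ≠ b) (hac : a ≠ c)
    (hbc : b ≠ c) (h : ∀ n, n ≠ a → n ≠ b → n ≠ c → f n = 0) :
    ∑ n, f n = f a + f b + f c := by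
  have key : ∀ n : Fin N, f n = (if n = a then f a else 0) + (if n = b then f b else 0)
      + (if n = c then f c else 0) := by
    intro n
    by_cases h1 : n = a
    · subst h1; simp [hab, hac]
    · by_cases h2 : n = b
      · subst h2; simp [h1, hbc]
      · by_cases h3 : n = c
        · subst h3; simp [h1, h2]
        · simp [h1, h2, h3, h n h1 h2 h3]
  rw [Finset.sum_congr rfl fun n _ => key n, Finset.sum_add_distrib, Finset.sum_add_distrib]
  simp

lemma cut_balance (M l : ℕ)
    (Q : Matrix (Fin (M+1) × Fin (l+1)) (Fin (M+1) × Fin (l+1)) ℝ)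
    (htri : ∀ (m n : Fin (M+1)) (i j : Fin (l+1)),
      1 < |(m.val : ℤ) - (n.val : ℤ)| → Q (m, i) (n, j) = 0)
    (hrow : ∀ s, ∑ t, Q s t = 0)
    (π : Fin (M+1) × Fin (l+1) → ℝ)
    (hπ' : ∀ s, ∑ t, π t * Q t s = 0)
    (m : ℕ) (hm : m < M) :
    ∑ i, π (⟨m, Nat.lt_succ_of_lt hm⟩, i) * (∑ k, Q (⟨m, Nat.lt_succ_of_lt hm⟩, i) (⟨m+1, Nat.succ_lt_succ hm⟩, k))
      = ∑ i, π (⟨m+1, Nat.succ_lt_succ hm⟩, i) * (∑ k, Q (⟨m+1, Nat.succ_lt_succ hm⟩, i) (⟨m, Nat.lt_succ_of_lt hm⟩, k)) := by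
  have hmm : m < M + 1 := by omega
  have hmm1 : m + 1 < M + 1 := by omega
  set am : Fin (M+1) := ⟨m, hmm⟩ with ham
  set bm : Fin (M+1) := ⟨m+1, hmm1⟩ with hbm
  set R : Fin (M+1) × Fin (l+1) → ℝ :=
    fun t => ∑ s : Fin (M+1) × Fin (l+1), (if s.1.val ≤ m then Q t s else 0) with hRdef
  have h0 : ∑ t, π t * R t = 0 := by
    calc ∑ t, π t * R t = ∑ t, ∑ s, (if s.1.val ≤ m then π t * Q t s else 0) := by
          refine Finset.sum_congr rfl fun t _ => ?_
          rw [hRdef]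
          dsimp only
          rw [Finset.mul_sum]
          refine Finset.sum_congr rfl fun s _ => ?_
          by_cases h : s.1.val ≤ m
          · rw [if_pos h, if_pos h]
          · rw [if_neg h, if_neg h, mul_zero]
      _ = ∑ s, ∑ t, (if s.1.val ≤ m then π t * Q t s else 0) := Finset.sum_comm
      _ = 0 := Finset.sum_eq_zero fun s _ => by
          by_cases h : s.1.val ≤ m
          · simp only [if_pos h]; exact hπ' s
          · simp only [if_neg h, Finset.sum_const_zero]
  have hRexp : ∀ t, R t = ∑ n : Fin (M+1), ∑ jj : Fin (l+1),
      (if n.val ≤ m then Q t (n, jj) else 0) := by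
    intro t; rw [hRdef]; dsimp only; rw [Fintype.sum_prod_type]
  have hRlow : ∀ (k : Fin (M+1)) (i : Fin (l+1)), k.val < m → R (k, i) = 0 := by
    intro k i hk
    have hr := hrow (k, i)
    rw [Fintype.sum_prod_type] at hr
    have e : R (k, i) = ∑ n : Fin (M+1), ∑ jj : Fin (l+1), Q (k, i) (n, jj) := by
      rw [hRexp]
      refine Finset.sum_congr rfl fun n _ => ?_
      by_cases h : n.val ≤ m
      · exact Finset.sum_congr rfl fun jj _ => if_pos h
      · refine Finset.sum_congr rfl fun jj _ => ?_
        rw [if_neg h, htri k n i jj (abs_gt' k.val n.val (by omega))]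
    rw [e, hr]
  have hRhigh : ∀ (k : Fin (M+1)) (i : Fin (l+1)), m + 1 < k.val → R (k, i) = 0 := by
    intro k i hk
    rw [hRexp]
    refine Finset.sum_eq_zero fun n _ => Finset.sum_eq_zero fun jj _ => ?_
    by_cases h : n.val ≤ m
    · rw [if_pos h, htri k n i jj (abs_gt' k.val n.val (by omega))]
    · rw [if_neg h]
  have hRm : ∀ i, R (am, i) = -(∑ k, Q (am, i) (bm, k)) := by
    intro i
    have hr := hrow (am, i)
    rw [Fintype.sum_prod_type] at hr
    have e : R (am, i) = ∑ n : Fin (M+1),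
        ((∑ jj, (if n.val ≤ m then Q (am, i) (n, jj) else 0)) - ∑ jj, Q (am, i) (n, jj)) := by
      rw [Finset.sum_sub_distrib, hr, sub_zero, hRexp]
    rw [e]
    rw [Finset.sum_eq_single bm]
    · have hc : ¬ (bm.val ≤ m) := by show ¬ (m + 1 ≤ m); omega
      simp only [if_neg hc, Finset.sum_const_zero, zero_sub]
    · intro n _ hn
      by_cases h : n.val ≤ m
      · rw [sub_eq_zero]
        exact Finset.sum_congr rfl fun jj _ => if_pos h
      · have hn2 : m + 2 ≤ n.val := by
          rcases Nat.lt_or_ge n.val (m+2) with h1 | h1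
          · exact absurd (Fin.ext (show n.val = m + 1 by omega) : n = bm) hn
          · exact h1
        simp only [if_neg h, Finset.sum_const_zero, zero_sub, neg_eq_zero]
        exact Finset.sum_eq_zero fun jj _ => htri am n i jj (abs_gt' m n.val (by omega))
    · simp
  have hRm1 : ∀ i, R (bm, i) = ∑ k, Q (bm, i) (am, k) := by
    intro i
    rw [hRexp]
    rw [Finset.sum_eq_single am]
    · have hc : am.val ≤ m := le_refl m
      exact Finset.sum_congr rfl fun jj _ => if_pos hc
    · intro n _ hn
      by_cases h : n.val ≤ m
      · have hn2 : n.val < m := by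
          rcases Nat.lt_or_ge n.val m with h1 | h1
          · exact h1
          · exact absurd (Fin.ext (show n.val = m by omega) : n = am) hn
        refine Finset.sum_eq_zero fun jj _ => ?_
        rw [if_pos h, htri bm n i jj (abs_gt' (m+1) n.val (by omega))]
      · exact Finset.sum_eq_zero fun jj _ => if_neg h
    · simp
  rw [Fintype.sum_prod_type] at h0
  rw [sum_two' _ am bm (Fin.ne_of_val_ne (show m ≠ m + 1 by omega)) (fun n hna hnb => by
      refine Finset.sum_eq_zero fun i _ => ?_
      have hcase : n.val < m ∨ m + 1 < n.val := by
        rcases Nat.lt_trichotomy n.val m with h1 | h1 | h1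
        · exact Or.inl h1
        · exact absurd (Fin.ext (h1 : n.val = m) : n = am) hna
        · rcases Nat.lt_or_ge n.val (m+2) with h2 | h2
          · exact absurd (Fin.ext (show n.val = m + 1 by omega) : n = bm) hnb
          · exact Or.inr (by omega)
      rcases hcase with h | h
      · rw [hRlow n i h, mul_zero]
      · rw [hRhigh n i h, mul_zero])] at h0
  have e1 : ∑ i, π (am, i) * R (am, i) = -∑ i, π (am, i) * (∑ k, Q (am, i) (bm, k)) := by
    rw [← Finset.sum_neg_distrib]
    exact Finset.sum_congr rfl fun i _ => by rw [hRm i, mul_neg]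
  have e2 : ∑ i, π (bm, i) * R (bm, i) = ∑ i, π (bm, i) * (∑ k, Q (bm, i) (am, k)) :=
    Finset.sum_congr rfl fun i _ => by rw [hRm1 i]
  rw [e1, e2] at h0
  linarith

theorem stmt_2
    (M l : ℕ) (hM : 1 ≤ M)
    (Q : Matrix (Fin (M+1) × Fin (l+1)) (Fin (M+1) × Fin (l+1)) ℝ)
    (htri : ∀ (m n : Fin (M+1)) (i j : Fin (l+1)),
      1 < |(m.val : ℤ) - (n.val : ℤ)| → Q (m, i) (n, j) = 0)
    (hrow : ∀ s, ∑ t, Q s t = 0)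
    (W U D : ℕ → Matrix (Fin (l+1)) (Fin (l+1)) ℝ)
    (hW : ∀ (m : ℕ) (hm : m ≤ M) (i j : Fin (l+1)),
      W m i j = Q (⟨m, by omega⟩, i) (⟨m, by omega⟩, j))
    (hU : ∀ (m : ℕ) (hm : m < M) (i j : Fin (l+1)),
      U m i j = Q (⟨m, by omega⟩, i) (⟨m+1, by omega⟩, j))
    (hD : ∀ (m : ℕ) (hm1 : 1 ≤ m) (hm2 : m ≤ M) (i j : Fin (l+1)),
      D m i j = Q (⟨m, by omega⟩, i) (⟨m-1, by omega⟩, j))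
    (hDES : ∀ (m : ℕ), 1 ≤ m → m ≤ M → ∀ (i j : Fin (l+1)), j ≠ 0 → D m i j = 0)
    (Ut : ℕ → Matrix (Fin (l+1)) (Fin (l+1)) ℝ)
    (hUt : ∀ (m : ℕ), m < M → ∀ (i j : Fin (l+1)),
      Ut m i j = if j = 0 then ∑ k, U m i k else 0)
    (hUtM : Ut M = 0)
    (B : ℕ → Matrix (Fin (l+1)) (Fin (l+1)) ℝ)
    (hB : ∀ (m : ℕ), m ≤ M → B m = W m + Ut m)
    (π : Fin (M+1) × Fin (l+1) → ℝ)
    (hπ : Matrix.vecMul π Q = 0) :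
    ∀ (m : ℕ) (hm1 : 1 ≤ m) (hm2 : m ≤ M),
      Matrix.vecMul (fun i => π (⟨m, by omega⟩, i)) (B m)
        = -(Matrix.vecMul (fun i => π (⟨m-1, by omega⟩, i)) (U (m-1))) := by
  have hπ' : ∀ s : Fin (M+1) × Fin (l+1), ∑ t, π t * Q t s = 0 := by
    intro s
    have h := congrFun hπ s
    simpa [Matrix.vecMul, dotProduct] using h
  intro m hm1 hm2
  have hmlt : m < M + 1 := by omega
  have hm1lt : m - 1 < M + 1 := by omega
  funext j
  simp only [Matrix.vecMul, dotProduct, Pi.neg_apply]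
  show ∑ i, π (⟨m, hmlt⟩, i) * B m i j = -∑ i, π (⟨m-1, hm1lt⟩, i) * U (m-1) i j
  have hUeq : ∀ (i jj : Fin (l+1)),
      U (m-1) i jj = Q (⟨m-1, hm1lt⟩, i) (⟨m, hmlt⟩, jj) := by
    intro i jj
    rw [hU (m-1) (by omega) i jj]
    congr 2
    exact Fin.ext (show m - 1 + 1 = m by omega)
  have hWeq : ∀ (i jj : Fin (l+1)),
      W m i jj = Q (⟨m, hmlt⟩, i) (⟨m, hmlt⟩, jj) := fun i jj => hW m hm2 i jj
  have lev : ∑ k : Fin (M+1), ∑ i, π (k, i) * Q (k, i) (⟨m, hmlt⟩, j) = 0 := by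
    have h := hπ' (⟨m, hmlt⟩, j)
    rwa [Fintype.sum_prod_type] at h
  by_cases hmM : m = M
  · -- top level: B M = W M
    have hBW : ∀ i, B m i j = W m i j := by
      intro i
      rw [hB m hm2, Matrix.add_apply, hmM, hUtM, Matrix.zero_apply, add_zero]
    rw [sum_two' _ ⟨m-1, hm1lt⟩ ⟨m, hmlt⟩ (Fin.ne_of_val_ne (show m - 1 ≠ m by omega))
      (fun k hka hkb => by
        refine Finset.sum_eq_zero fun i _ => ?_
        have h1 : k.val ≠ m - 1 := fun h => hka (Fin.ext h)
        have h2 : k.val ≠ m := fun h => hkb (Fin.ext h)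
        have hkM : k.val < M + 1 := k.isLt
        rw [htri k ⟨m, hmlt⟩ i j (abs_gt' k.val m (by omega)), mul_zero])] at lev
    have eL : ∑ i, π (⟨m, hmlt⟩, i) * B m i j
        = ∑ i, π (⟨m, hmlt⟩, i) * Q (⟨m, hmlt⟩, i) (⟨m, hmlt⟩, j) :=
      Finset.sum_congr rfl fun i _ => by rw [hBW i, hWeq i j]
    have eR : ∑ i, π (⟨m-1, hm1lt⟩, i) * U (m-1) i j
        = ∑ i, π (⟨m-1, hm1lt⟩, i) * Q (⟨m-1, hm1lt⟩, i) (⟨m, hmlt⟩, j) :=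
      Finset.sum_congr rfl fun i _ => by rw [hUeq i j]
    rw [eL, eR]
    linarith
  · -- interior level
    have hmM' : m < M := by omega
    have hp1lt : m + 1 < M + 1 := by omega
    have hDeq : ∀ (i jj : Fin (l+1)),
        D (m+1) i jj = Q (⟨m+1, hp1lt⟩, i) (⟨m, hmlt⟩, jj) := by
      intro i jj
      rw [hD (m+1) (by omega) (by omega) i jj]
      congr 2
    rw [sum_three' _ ⟨m-1, hm1lt⟩ ⟨m, hmlt⟩ ⟨m+1, hp1lt⟩
      (Fin.ne_of_val_ne (show m - 1 ≠ m by omega))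
      (Fin.ne_of_val_ne (show m - 1 ≠ m + 1 by omega))
      (Fin.ne_of_val_ne (show m ≠ m + 1 by omega))
      (fun k hka hkb hkc => by
        refine Finset.sum_eq_zero fun i _ => ?_
        have h1 : k.val ≠ m - 1 := fun h => hka (Fin.ext h)
        have h2 : k.val ≠ m := fun h => hkb (Fin.ext h)
        have h3 : k.val ≠ m + 1 := fun h => hkc (Fin.ext h)
        rw [htri k ⟨m, hmlt⟩ i j (abs_gt' k.val m (by omega)), mul_zero])] at lev
    have eR : ∑ i, π (⟨m-1, hm1lt⟩, i) * U (m-1) i j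
        = ∑ i, π (⟨m-1, hm1lt⟩, i) * Q (⟨m-1, hm1lt⟩, i) (⟨m, hmlt⟩, j) :=
      Finset.sum_congr rfl fun i _ => by rw [hUeq i j]
    have eW : ∑ i, π (⟨m, hmlt⟩, i) * W m i j
        = ∑ i, π (⟨m, hmlt⟩, i) * Q (⟨m, hmlt⟩, i) (⟨m, hmlt⟩, j) :=
      Finset.sum_congr rfl fun i _ => by rw [hWeq i j]
    have eD : ∑ i, π (⟨m+1, hp1lt⟩, i) * D (m+1) i j
        = ∑ i, π (⟨m+1, hp1lt⟩, i) * Q (⟨m+1, hp1lt⟩, i) (⟨m, hmlt⟩, j) :=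
      Finset.sum_congr rfl fun i _ => by rw [hDeq i j]
    -- key: π^m Ut^m (at column j) equals π^{m+1} D^{m+1} (at column j)
    have key : ∑ i, π (⟨m, hmlt⟩, i) * Ut m i j
        = ∑ i, π (⟨m+1, hp1lt⟩, i) * D (m+1) i j := by
      by_cases hj : j = 0
      · subst hj
        have cb := cut_balance M l Q htri hrow π hπ' m hmM'
        have c1 : ∑ i, π (⟨m, hmlt⟩, i) * (∑ k, Q (⟨m, hmlt⟩, i) (⟨m+1, hp1lt⟩, k))
            = ∑ i, π (⟨m, hmlt⟩, i) * Ut m i 0 := by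
          refine Finset.sum_congr rfl fun i _ => ?_
          rw [hUt m hmM' i 0, if_pos rfl]
          congr 1
          exact Finset.sum_congr rfl fun k _ => (hU m hmM' i k).symm
        have c2 : ∑ i, π (⟨m+1, hp1lt⟩, i) * (∑ k, Q (⟨m+1, hp1lt⟩, i) (⟨m, hmlt⟩, k))
            = ∑ i, π (⟨m+1, hp1lt⟩, i) * D (m+1) i 0 := by
          refine Finset.sum_congr rfl fun i _ => ?_
          congr 1
          rw [show ∑ k, Q (⟨m+1, hp1lt⟩, i) (⟨m, hmlt⟩, k) = ∑ k, D (m+1) i k from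
            Finset.sum_congr rfl fun k _ => (hDeq i k).symm]
          rw [Finset.sum_eq_single 0]
          · intro k _ hk
            exact hDES (m+1) (by omega) (by omega) i k hk
          · simp
        rw [← c1, ← c2]
        exact cb
      · have z1 : ∀ i : Fin (l+1), Ut m i j = 0 := fun i => by
          rw [hUt m hmM' i j, if_neg hj]
        have z2 : ∀ i : Fin (l+1), D (m+1) i j = 0 := fun i =>
          hDES (m+1) (by omega) (by omega) i j hj
        simp [z1, z2]
    have eL : ∑ i, π (⟨m, hmlt⟩, i) * B m i j
        = ∑ i, π (⟨m, hmlt⟩, i) * W m i j + ∑ i, π (⟨m, hmlt⟩, i) * Ut m i j := by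
      rw [← Finset.sum_add_distrib]
      refine Finset.sum_congr rfl fun i _ => ?_
      rw [hB m hm2, Matrix.add_apply, mul_add]
    rw [eL, key, eW, eD, eR]
    linarith
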